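/- Let q1 = (√κ − n^{1/4})/(√κ + n^{1/4}) and x* ∈ ℝ^d be the vector whose ((i−1)p+j)-th coordinate equals q1^j for every i = 1,…,n and j = 1,…,p. Then x* is a global minimizer of F, i.e. F(x*) ≤ F(y) for all y ∈ ℝ^d (equivalently, ∇F(x*) = 0). -/

import Mathlib

open Finset
open scoped RealInnerProductSpace

/-- The `p × p` tridiagonal matrix with diagonal entries `2` except the last one, which is `ξ`,
and `-1` on the sub- and super-diagonal. -/
noncomputable def Tmat (p : ℕ) (ξ : ℝ) : Matrix (Fin p) (Fin p) ℝ :=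
  fun j k =>
    if j = k then (if (j : ℕ) = p - 1 then ξ else 2)
    else if (j : ℕ) + 1 = (k : ℕ) ∨ (k : ℕ) + 1 = (j : ℕ) then -1 else 0

/-- The `d × d` matrix (`d = np`, coordinates indexed by `Fin n × Fin p`) which is zero outside
the `i`-th diagonal `p × p` block, and whose `i`-th diagonal block is `Tmat p ξ`. -/
noncomputable def Amat (n p : ℕ) (ξ : ℝ) (i : Fin n) :
    Matrix (Fin n × Fin p) (Fin n × Fin p) ℝ :=
  fun a b => if a.1 = i ∧ b.1 = i then Tmat p ξ a.2 b.2 else 0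

/-- The `d × d` diagonal matrix which is the orthogonal projection onto the coordinates
of the `i`-th block of `p` coordinates. -/
noncomputable def Bmat (n p : ℕ) (i : Fin n) :
    Matrix (Fin n × Fin p) (Fin n × Fin p) ℝ :=
  fun a b => if a = b ∧ a.1 = i then 1 else 0

/-- The component function
`f_i(x) = ((√n L − nμ)/4) ((1/2)⟨x, A_i x⟩ − ⟨e_{(i−1)p+1}, x⟩) + (nμ/2)⟨x, B_i x⟩`. -/
noncomputable def fComp2 (n p : ℕ) [NeZero p] (L μ ξ : ℝ) (i : Fin n)
    (x : EuclideanSpace ℝ (Fin n × Fin p)) : ℝ :=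
  ((Real.sqrt n * L - n * μ) / 4) *
      ((1 / 2) * (∑ a : Fin n × Fin p, ∑ b : Fin n × Fin p, x a * Amat n p ξ i a b * x b)
        - x (i, 0)) +
    (n * μ / 2) * (∑ a : Fin n × Fin p, ∑ b : Fin n × Fin p, x a * Bmat n p i a b * x b)

/- ### Auxiliary machinery -/

/-- ℕ-indexed version of `Tmat`. -/
noncomputable def ttN (p : ℕ) (ξ : ℝ) (j k : ℕ) : ℝ :=
  if j = k then (if j = p - 1 then ξ else 2)
  else if j + 1 = k ∨ k + 1 = j then -1 else 0

/-- The standard tridiagonal matrix (diag `2`, off-diag `-1`) on ℕ. -/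
noncomputable def tt2 (j k : ℕ) : ℝ :=
  if j = k then 2 else if j + 1 = k ∨ k + 1 = j then -1 else 0

lemma ttN_split (p : ℕ) (ξ : ℝ) (j k : ℕ) :
    ttN p ξ j k = tt2 j k + (if j = k ∧ j = p - 1 then ξ - 2 else 0) := by
  unfold ttN tt2
  by_cases h1 : j = k
  · subst h1
    by_cases h2 : j = p - 1 <;> simp [h2] <;> ring
  · simp [h1]

lemma tridQ_eq (U : ℕ → ℝ) : ∀ m : ℕ, 1 ≤ m →
    (∑ j ∈ Finset.range m, ∑ k ∈ Finset.range m, U j * tt2 j k * U k)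
      = U 0 ^ 2 + (∑ j ∈ Finset.range (m - 1), (U j - U (j + 1)) ^ 2) + U (m - 1) ^ 2 := by
  intro m
  induction m with
  | zero => omega
  | succ m ih =>
    intro _
    rcases Nat.eq_zero_or_pos m with h0 | hm
    · subst h0
      simp [tt2]
      ring
    · obtain ⟨mm, rfl⟩ : ∃ mm, m = mm + 1 := ⟨m - 1, by omega⟩
      simp only [Finset.sum_range_succ, Finset.sum_add_distrib, Nat.add_sub_cancel] at ih ⊢
      have hC : ∑ k ∈ Finset.range mm, U (mm + 1) * tt2 (mm + 1) k * U k = 0 := by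
        refine Finset.sum_eq_zero fun k hk => ?_
        have hk' := Finset.mem_range.mp hk
        have : tt2 (mm + 1) k = 0 := by
          unfold tt2; rw [if_neg (by omega), if_neg (by omega)]
        rw [this]; ring
      have hH : ∑ j ∈ Finset.range mm, U j * tt2 j (mm + 1) * U (mm + 1) = 0 := by
        refine Finset.sum_eq_zero fun k hk => ?_
        have hk' := Finset.mem_range.mp hk
        have : tt2 k (mm + 1) = 0 := by
          unfold tt2; rw [if_neg (by omega), if_neg (by omega)]
        rw [this]; ring
      have hG : tt2 (mm + 1) mm = -1 := by
        unfold tt2; rw [if_neg (by omega), if_pos (by omega)]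
      have hI : tt2 mm (mm + 1) = -1 := by
        unfold tt2; rw [if_neg (by omega), if_pos (by omega)]
      have hJ : tt2 (mm + 1) (mm + 1) = 2 := by unfold tt2; rw [if_pos rfl]
      rw [hC, hH, hG, hI, hJ]
      linear_combination ih (by omega)

lemma Tmat_eq_ttN (p : ℕ) (ξ : ℝ) (j k : Fin p) :
    Tmat p ξ j k = ttN p ξ (j : ℕ) (k : ℕ) := by
  simp [Tmat, ttN, Fin.ext_iff]

lemma Tsym (p : ℕ) (ξ : ℝ) (j k : Fin p) : Tmat p ξ j k = Tmat p ξ k j := by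
  unfold Tmat
  by_cases h1 : j = k
  · subst h1; simp
  · rw [if_neg h1, if_neg (Ne.symm h1)]
    simp only [or_comm]

lemma QT_nonneg (p : ℕ) (hp : 1 ≤ p) (ξ : ℝ) (hξ : 1 ≤ ξ) (u : Fin p → ℝ) :
    0 ≤ ∑ j : Fin p, ∑ k : Fin p, u j * Tmat p ξ j k * u k := by
  classical
  set U : ℕ → ℝ := fun m => if h : m < p then u ⟨m, h⟩ else 0 with hU
  have hconv : (∑ j : Fin p, ∑ k : Fin p, u j * Tmat p ξ j k * u k)
      = ∑ j ∈ Finset.range p, ∑ k ∈ Finset.range p, U j * ttN p ξ j k * U k := by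
    rw [← Fin.sum_univ_eq_sum_range (fun j => ∑ k ∈ Finset.range p, U j * ttN p ξ j k * U k) p]
    refine Finset.sum_congr rfl fun j _ => ?_
    rw [← Fin.sum_univ_eq_sum_range (fun k => U (j : ℕ) * ttN p ξ (j : ℕ) k * U k) p]
    refine Finset.sum_congr rfl fun k _ => ?_
    rw [Tmat_eq_ttN]
    simp [hU, j.isLt, k.isLt]
  have hsplit : (∑ j ∈ Finset.range p, ∑ k ∈ Finset.range p, U j * ttN p ξ j k * U k)
      = (∑ j ∈ Finset.range p, ∑ k ∈ Finset.range p, U j * tt2 j k * U k)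
          + (ξ - 2) * U (p - 1) ^ 2 := by
    have h : ∀ j k : ℕ, U j * ttN p ξ j k * U k
        = U j * tt2 j k * U k + U j * (if j = k ∧ j = p - 1 then ξ - 2 else 0) * U k := by
      intro j k; rw [ttN_split]; ring
    simp only [h, Finset.sum_add_distrib]
    congr 1
    rw [Finset.sum_eq_single (p - 1)]
    · rw [Finset.sum_eq_single (p - 1)]
      · rw [if_pos ⟨rfl, rfl⟩]; ring
      · intro k _ hk; rw [if_neg (by tauto), mul_zero, zero_mul]
      · intro h; exact absurd (Finset.mem_range.mpr (by omega)) h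
    · intro j _ hj
      refine Finset.sum_eq_zero fun k _ => ?_
      rw [if_neg (by tauto), mul_zero, zero_mul]
    · intro h; exact absurd (Finset.mem_range.mpr (by omega)) h
  rw [hconv, hsplit, tridQ_eq U p hp]
  have h1 : 0 ≤ ∑ j ∈ Finset.range (p - 1), (U j - U (j + 1)) ^ 2 :=
    Finset.sum_nonneg fun j _ => sq_nonneg _
  nlinarith [sq_nonneg (U 0), sq_nonneg (U (p - 1))]

lemma assemble (c e QTu BL QTw Su P Sw u0 w0 : ℝ)
    (h1 : 0 ≤ c * QTu) (h2 : 0 ≤ e * Su) (h3 : c * (BL - u0) + e * P = 0) :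
    c * (1 / 2 * QTw - w0) + e / 2 * Sw
      ≤ c * (1 / 2 * (QTu + 2 * BL + QTw) - (u0 + w0)) + e / 2 * (Su + 2 * P + Sw) := by
  linarith

lemma Tw (p : ℕ) (ξ q1 : ℝ) (j : ℕ) (hj : j < p) :
    ∑ k ∈ Finset.range p, ttN p ξ j k * q1 ^ (k + 1)
      = (if j = p - 1 then ξ else 2) * q1 ^ (j + 1)
        - (if 1 ≤ j then q1 ^ j else 0)
        - (if j + 1 < p then q1 ^ (j + 2) else 0) := by
  classical
  have hpt : ∀ k, ttN p ξ j k * q1 ^ (k + 1)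
      = (if k = j then (if j = p - 1 then ξ else 2) * q1 ^ (j + 1) else 0)
        + (if k = j + 1 then -q1 ^ (j + 2) else 0)
        + (if k + 1 = j then -q1 ^ j else 0) := by
    intro k
    unfold ttN
    split_ifs <;> subst_vars <;> (first | ring1 | (exfalso; omega))
  simp only [hpt, Finset.sum_add_distrib]
  rw [Finset.sum_ite_eq' (Finset.range p) j, Finset.sum_ite_eq' (Finset.range p) (j + 1)]
  have h3 : (∑ k ∈ Finset.range p, if k + 1 = j then -q1 ^ j else 0)
      = if 1 ≤ j then -q1 ^ j else 0 := by
    by_cases h0 : j = 0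
    · subst h0
      simp
    · obtain ⟨jj, rfl⟩ : ∃ jj, j = jj + 1 := ⟨j - 1, by omega⟩
      have h : ∀ k, (if k + 1 = jj + 1 then -q1 ^ (jj + 1) else 0)
          = if k = jj then -q1 ^ (jj + 1) else 0 := by
        intro k; by_cases h : k = jj
        · rw [if_pos (by omega), if_pos h]
        · rw [if_neg (by omega), if_neg h]
      simp only [h]
      rw [Finset.sum_ite_eq' (Finset.range p) jj]
      rw [if_pos (Finset.mem_range.mpr (by omega)), if_pos (by omega)]
  rw [h3, if_pos (Finset.mem_range.mpr hj)]
  by_cases h4 : j + 1 < p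
  · rw [if_pos (Finset.mem_range.mpr h4), if_pos h4]
    by_cases h5 : 1 ≤ j <;> simp [h5] <;> ring
  · rw [if_neg (fun hh => h4 (Finset.mem_range.mp hh)), if_neg h4]
    by_cases h5 : 1 ≤ j <;> simp [h5] <;> ring

/-- The vector `x*` whose `((i−1)p+j)`-th coordinate is `q1^j`, with
`q1 = (√κ − n^{1/4})/(√κ + n^{1/4})`, is a global minimizer of `F = (1/n) ∑ f_i`
for the hard instance of Case (2). -/
theorem stmt4 (n p : ℕ) (hn : 2 ≤ n) [NeZero p] (hp : 1 ≤ p)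
    (L μ κ ξ q1 : ℝ) (hμ : 0 < μ) (hL : 0 < L) (hκ : κ = L / μ) (hκn : Real.sqrt n < κ)
    (hξ : ξ = (Real.sqrt κ + 3 * (n : ℝ) ^ ((1 : ℝ) / 4)) /
        (Real.sqrt κ + (n : ℝ) ^ ((1 : ℝ) / 4)))
    (hq1 : q1 = (Real.sqrt κ - (n : ℝ) ^ ((1 : ℝ) / 4)) /
        (Real.sqrt κ + (n : ℝ) ^ ((1 : ℝ) / 4)))
    (F : EuclideanSpace ℝ (Fin n × Fin p) → ℝ)
    (hF : F = fun x => (1 / (n : ℝ)) * ∑ i : Fin n, fComp2 n p L μ ξ i x)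
    (xstar : EuclideanSpace ℝ (Fin n × Fin p))
    (hxstar : ∀ (i : Fin n) (j : Fin p), xstar (i, j) = q1 ^ ((j : ℕ) + 1)) :
    ∀ y : EuclideanSpace ℝ (Fin n × Fin p), F xstar ≤ F y := by
  intro y
  -- scalar setup
  set t : ℝ := (n : ℝ) ^ ((1 : ℝ) / 4) with htdef
  set s : ℝ := Real.sqrt κ with hsdef
  have hn0 : (0 : ℝ) < n := by
    have : (2 : ℝ) ≤ n := by exact_mod_cast hn
    linarith
  have ht0 : 0 < t := Real.rpow_pos_of_pos hn0 _
  have ht2 : t ^ 2 = Real.sqrt n := by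
    rw [htdef, ← Real.rpow_natCast ((n : ℝ) ^ ((1 : ℝ) / 4)) 2, ← Real.rpow_mul hn0.le,
      Real.sqrt_eq_rpow]
    norm_num
  have ht4 : t ^ 4 = (n : ℝ) := by
    rw [htdef, ← Real.rpow_natCast ((n : ℝ) ^ ((1 : ℝ) / 4)) 4, ← Real.rpow_mul hn0.le]
    norm_num
  have hsqn0 : 0 < Real.sqrt n := Real.sqrt_pos.mpr hn0
  have hκ0 : 0 < κ := lt_trans hsqn0 hκn
  have hs2 : s ^ 2 = κ := Real.sq_sqrt hκ0.le
  have hs0 : 0 ≤ s := Real.sqrt_nonneg _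
  have hts : t < s := by nlinarith
  have hst0 : 0 < s + t := by linarith
  have hstne : s + t ≠ 0 := ne_of_gt hst0
  have hL' : L = κ * μ := by rw [hκ]; field_simp
  set c1 : ℝ := (Real.sqrt n * L - n * μ) / 4 with hc1def
  have hc1 : c1 = μ * t ^ 2 * (s ^ 2 - t ^ 2) / 4 := by
    rw [hc1def, hL', ← ht2, ← ht4, ← hs2]
    ring
  have hc1nn : 0 ≤ c1 := by
    rw [hc1]
    have h1 : 0 < s ^ 2 - t ^ 2 := by nlinarith
    positivity
  have hξ1 : 1 ≤ ξ := by
    rw [hξ, le_div_iff₀ hst0]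
    linarith
  -- the two scalar stationarity identities
  have hI : c1 * (2 * q1 - q1 ^ 2 - 1) + (n : ℝ) * μ * q1 = 0 := by
    rw [hc1, hq1, ← ht4]
    field_simp
    ring
  have hII : c1 * (ξ * q1 - 1) + (n : ℝ) * μ * q1 = 0 := by
    rw [hc1, hq1, hξ, ← ht4]
    field_simp
    ring
  -- stationarity at xstar, rowwise
  have hstat : ∀ j : Fin p,
      c1 * ((∑ k : Fin p, Tmat p ξ j k * q1 ^ ((k : ℕ) + 1))
          - (if j = (0 : Fin p) then 1 else 0))
        + (n : ℝ) * μ * q1 ^ ((j : ℕ) + 1) = 0 := by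
    intro j
    have hjp := j.isLt
    have hsum : (∑ k : Fin p, Tmat p ξ j k * q1 ^ ((k : ℕ) + 1))
        = ∑ k ∈ Finset.range p, ttN p ξ (j : ℕ) k * q1 ^ (k + 1) := by
      rw [← Fin.sum_univ_eq_sum_range (fun k => ttN p ξ (j : ℕ) k * q1 ^ (k + 1)) p]
      exact Finset.sum_congr rfl fun k _ => by rw [Tmat_eq_ttN]
    have hδ : (if j = (0 : Fin p) then (1 : ℝ) else 0) = (if (j : ℕ) = 0 then 1 else 0) := by
      simp only [Fin.ext_iff, Fin.val_zero]
    rw [hsum, Tw p ξ q1 (j : ℕ) j.isLt, hδ]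
    rcases Nat.eq_zero_or_pos (j : ℕ) with h0 | h0
    · rw [h0]
      by_cases h1 : p = 1
      · rw [if_pos (by omega), if_neg (by omega), if_neg (by omega), if_pos rfl]
        linear_combination hII
      · rw [if_neg (by omega), if_neg (by omega), if_pos (by omega), if_pos rfl]
        linear_combination hI
    · by_cases h1 : (j : ℕ) = p - 1
      · rw [if_pos h1, if_pos (by omega), if_neg (by omega), if_neg (by omega)]
        linear_combination q1 ^ (j : ℕ) * hII
      · rw [if_neg h1, if_pos (by omega), if_pos (by omega), if_neg (by omega)]
        linear_combination q1 ^ (j : ℕ) * hI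
  -- block-diagonal reduction of the two quadratic forms
  have hAx : ∀ (x : EuclideanSpace ℝ (Fin n × Fin p)) (i : Fin n),
      (∑ a : Fin n × Fin p, ∑ b : Fin n × Fin p, x a * Amat n p ξ i a b * x b)
        = ∑ j : Fin p, ∑ k : Fin p, x (i, j) * Tmat p ξ j k * x (i, k) := by
    intro x i
    rw [Fintype.sum_prod_type, Finset.sum_eq_single i
      (fun b _ hb => by simp [Amat, hb]) (by simp)]
    refine Finset.sum_congr rfl fun j _ => ?_
    rw [Fintype.sum_prod_type, Finset.sum_eq_single i
      (fun b _ hb => by simp [Amat, hb]) (by simp)]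
    refine Finset.sum_congr rfl fun k _ => ?_
    simp [Amat]
  have hBx : ∀ (x : EuclideanSpace ℝ (Fin n × Fin p)) (i : Fin n),
      (∑ a : Fin n × Fin p, ∑ b : Fin n × Fin p, x a * Bmat n p i a b * x b)
        = ∑ j : Fin p, x (i, j) ^ 2 := by
    intro x i
    have h1 : ∀ a : Fin n × Fin p, (∑ b : Fin n × Fin p, x a * Bmat n p i a b * x b)
        = if a.1 = i then x a ^ 2 else 0 := by
      intro a
      rw [Finset.sum_eq_single a]
      · by_cases h : a.1 = i <;> simp [Bmat, h, sq]
      · intro b _ hb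
        simp [Bmat, Ne.symm hb]
      · simp
    simp only [h1]
    rw [Fintype.sum_prod_type, Finset.sum_eq_single i
      (fun b _ hb => Finset.sum_eq_zero fun k _ => by simp [hb]) (by simp)]
    simp
  set c2 : ℝ := (n : ℝ) * μ / 2 with hc2def
  have hF2 : ∀ (x : EuclideanSpace ℝ (Fin n × Fin p)) (i : Fin n), fComp2 n p L μ ξ i x
      = c1 * ((1 / 2) * (∑ j : Fin p, ∑ k : Fin p, x (i, j) * Tmat p ξ j k * x (i, k))
          - x (i, 0))
        + c2 * ∑ j : Fin p, x (i, j) ^ 2 := by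
    intro x i
    rw [fComp2, hAx x i, hBx x i]
  -- the per-block inequality
  have hblock : ∀ i : Fin n, fComp2 n p L μ ξ i xstar ≤ fComp2 n p L μ ξ i y := by
    intro i
    set u : Fin p → ℝ := fun j => y (i, j) - q1 ^ ((j : ℕ) + 1) with hu
    have hQTu : 0 ≤ ∑ j : Fin p, ∑ k : Fin p, u j * Tmat p ξ j k * u k :=
      QT_nonneg p hp ξ hξ1 u
    have hSu : 0 ≤ ∑ j : Fin p, u j ^ 2 := Finset.sum_nonneg fun j _ => sq_nonneg _
    have hQT : (∑ j : Fin p, ∑ k : Fin p, y (i, j) * Tmat p ξ j k * y (i, k))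
        = (∑ j : Fin p, ∑ k : Fin p, u j * Tmat p ξ j k * u k)
          + 2 * (∑ j : Fin p, ∑ k : Fin p, u j * Tmat p ξ j k * q1 ^ ((k : ℕ) + 1))
          + (∑ j : Fin p, ∑ k : Fin p,
              q1 ^ ((j : ℕ) + 1) * Tmat p ξ j k * q1 ^ ((k : ℕ) + 1)) := by
      have hsw : (∑ j : Fin p, ∑ k : Fin p, q1 ^ ((j : ℕ) + 1) * Tmat p ξ j k * u k)
          = ∑ j : Fin p, ∑ k : Fin p, u j * Tmat p ξ j k * q1 ^ ((k : ℕ) + 1) := by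
        rw [Finset.sum_comm]
        exact Finset.sum_congr rfl fun j _ => Finset.sum_congr rfl fun k _ => by
          rw [Tsym p ξ]; ring
      have hpt : ∀ j k : Fin p, y (i, j) * Tmat p ξ j k * y (i, k)
          = u j * Tmat p ξ j k * u k + u j * Tmat p ξ j k * q1 ^ ((k : ℕ) + 1)
            + q1 ^ ((j : ℕ) + 1) * Tmat p ξ j k * u k
            + q1 ^ ((j : ℕ) + 1) * Tmat p ξ j k * q1 ^ ((k : ℕ) + 1) := by
        intro j k; simp only [hu]; ring
      simp only [hpt, Finset.sum_add_distrib]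
      rw [hsw]; ring
    have hS : (∑ j : Fin p, y (i, j) ^ 2)
        = (∑ j : Fin p, u j ^ 2) + 2 * (∑ j : Fin p, u j * q1 ^ ((j : ℕ) + 1))
          + ∑ j : Fin p, (q1 ^ ((j : ℕ) + 1)) ^ 2 := by
      have hpt : ∀ j : Fin p, y (i, j) ^ 2
          = u j ^ 2 + u j * q1 ^ ((j : ℕ) + 1) + u j * q1 ^ ((j : ℕ) + 1)
            + (q1 ^ ((j : ℕ) + 1)) ^ 2 := by
        intro j; simp only [hu]; ring
      simp only [hpt, Finset.sum_add_distrib]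
      ring
    have hst0' : c1 * ((∑ j : Fin p, ∑ k : Fin p, u j * Tmat p ξ j k * q1 ^ ((k : ℕ) + 1))
          - u 0)
        + (n : ℝ) * μ * (∑ j : Fin p, u j * q1 ^ ((j : ℕ) + 1)) = 0 := by
      have hterm : ∀ j : Fin p,
          c1 * ((∑ k : Fin p, u j * Tmat p ξ j k * q1 ^ ((k : ℕ) + 1))
              - u j * (if j = (0 : Fin p) then 1 else 0))
            + (n : ℝ) * μ * (u j * q1 ^ ((j : ℕ) + 1)) = 0 := by
        intro j
        have h := hstat j
        have h2 : (∑ k : Fin p, u j * Tmat p ξ j k * q1 ^ ((k : ℕ) + 1))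
            = u j * ∑ k : Fin p, Tmat p ξ j k * q1 ^ ((k : ℕ) + 1) := by
          rw [Finset.mul_sum]
          exact Finset.sum_congr rfl fun k _ => by ring
        rw [h2]
        linear_combination u j * h
      have hsum0 : ∑ j : Fin p,
          (c1 * ((∑ k : Fin p, u j * Tmat p ξ j k * q1 ^ ((k : ℕ) + 1))
              - u j * (if j = (0 : Fin p) then 1 else 0))
            + (n : ℝ) * μ * (u j * q1 ^ ((j : ℕ) + 1))) = 0 :=
        Finset.sum_eq_zero fun j _ => hterm j
      have hδ : (∑ j : Fin p, u j * (if j = (0 : Fin p) then (1 : ℝ) else 0)) = u 0 := by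
        simp only [mul_ite, mul_one, mul_zero]
        rw [Finset.sum_ite_eq' Finset.univ (0 : Fin p) u]
        simp
      have hre : ∑ j : Fin p,
          (c1 * ((∑ k : Fin p, u j * Tmat p ξ j k * q1 ^ ((k : ℕ) + 1))
              - u j * (if j = (0 : Fin p) then 1 else 0))
            + (n : ℝ) * μ * (u j * q1 ^ ((j : ℕ) + 1)))
          = c1 * ((∑ j : Fin p, ∑ k : Fin p, u j * Tmat p ξ j k * q1 ^ ((k : ℕ) + 1)) - u 0)
            + (n : ℝ) * μ * (∑ j : Fin p, u j * q1 ^ ((j : ℕ) + 1)) := by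
        rw [Finset.sum_add_distrib, ← Finset.mul_sum, ← Finset.mul_sum,
          Finset.sum_sub_distrib, hδ]
      rw [hre] at hsum0
      exact hsum0
    rw [hF2 y i, hF2 xstar i]
    simp only [hxstar]
    rw [hQT, hS]
    have hu0 : y (i, (0 : Fin p)) = u 0 + q1 ^ (((0 : Fin p) : ℕ) + 1) := by
      simp only [hu]; ring
    rw [hu0]
    have hnn1 : 0 ≤ c1 * (∑ j : Fin p, ∑ k : Fin p, u j * Tmat p ξ j k * u k) :=
      mul_nonneg hc1nn hQTu
    have hnn2 : 0 ≤ (n : ℝ) * μ * (∑ j : Fin p, u j ^ 2) :=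
      mul_nonneg (by positivity) hSu
    rw [hc2def]
    exact assemble c1 ((n : ℝ) * μ) _ _ _ _ _ _ _ _ hnn1 hnn2 hst0'
  rw [hF]
  simp only
  have hn0' : (0 : ℝ) ≤ 1 / (n : ℝ) := by positivity
  exact mul_le_mul_of_nonneg_left (Finset.sum_le_sum fun i _ => hblock i) hn0'
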